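/- Let R be a po-ring and let A be a po-coherent partially ordered right R-module. Then the intersection of any two finitely generated R-submodules of A is a finitely generated R-submodule, and the intersection of any two finitely generated R⁺-subsemimodules of A is a finitely generated R⁺-subsemimodule. -/

import Mathlib

/-- A *po-ring*: a ring equipped with a partial order such that addition is
translation-invariant, multiplication by nonnegative elements (on either side) is monotone,
the ring is directed (every element is a difference of two nonnegative elements),
and `0 ≤ 1`. -/
class PORing (R : Type*) extends Ring R, PartialOrder R where
  add_le_add_right' : ∀ a b : R, a ≤ b → ∀ c : R, a + c ≤ b + c
  mul_le_mul_of_nonneg_right' : ∀ a b c : R, a ≤ b → 0 ≤ c → a * c ≤ b * c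
  mul_le_mul_of_nonneg_left' : ∀ a b c : R, a ≤ b → 0 ≤ c → c * a ≤ c * b
  directed' : ∀ x : R, ∃ y z : R, 0 ≤ y ∧ 0 ≤ z ∧ x = y - z
  zero_le_one' : (0 : R) ≤ 1

/-- A *partially ordered right module* over a po-ring `R`: an additive abelian group with a
right `R`-action `rsmul` (written on the right, so `rsmul a ξ` is `aξ`), with the usual
right-module axioms, such that addition is translation-invariant and
`0 ≤ a`, `0 ≤ ξ` imply `0 ≤ aξ`. -/
class PORightModule (R : Type*) [PORing R] (A : Type*) [AddCommGroup A] [PartialOrder A] where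
  rsmul : A → R → A
  add_rsmul : ∀ (a b : A) (r : R), rsmul (a + b) r = rsmul a r + rsmul b r
  rsmul_add : ∀ (a : A) (r s : R), rsmul a (r + s) = rsmul a r + rsmul a s
  rsmul_mul : ∀ (a : A) (r s : R), rsmul a (r * s) = rsmul (rsmul a r) s
  rsmul_one : ∀ a : A, rsmul a 1 = a
  add_le_add_right' : ∀ a b : A, a ≤ b → ∀ c : A, a + c ≤ b + c
  rsmul_nonneg : ∀ (a : A) (r : R), 0 ≤ a → 0 ≤ r → 0 ≤ rsmul a r

open PORightModule

/-- A po-ring is a partially ordered right module over itself. -/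
instance PORing.toPORightModule (R : Type*) [PORing R] : PORightModule R R where
  rsmul := (· * ·)
  add_rsmul := add_mul
  rsmul_add := mul_add
  rsmul_mul a r s := (mul_assoc a r s).symm
  rsmul_one := mul_one
  add_le_add_right' := PORing.add_le_add_right'
  rsmul_nonneg a r ha hr := by
    have h := PORing.mul_le_mul_of_nonneg_right' 0 a r ha hr
    simpa using h

/-- Products of partially ordered right modules, ordered coordinatewise. -/
instance Pi.instPORightModule {R : Type*} [PORing R] {ι : Type*} {A : ι → Type*}
    [∀ i, AddCommGroup (A i)] [∀ i, PartialOrder (A i)] [∀ i, PORightModule R (A i)] :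
    PORightModule R (∀ i, A i) where
  rsmul x r i := rsmul (x i) r
  add_rsmul a b r := funext fun i => add_rsmul (a i) (b i) r
  rsmul_add a r s := funext fun i => rsmul_add (a i) r s
  rsmul_mul a r s := funext fun i => rsmul_mul (a i) r s
  rsmul_one a := funext fun i => rsmul_one (a i)
  add_le_add_right' a b h c := by
    intro i
    exact PORightModule.add_le_add_right' R (a i) (b i) (h i) (c i)
  rsmul_nonneg a r ha hr := by
    intro i
    exact PORightModule.rsmul_nonneg (a i) r (ha i) hr

/-- Binary products of partially ordered right modules, ordered coordinatewise. -/
instance Prod.instPORightModule {R : Type*} [PORing R] {A B : Type*}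
    [AddCommGroup A] [PartialOrder A] [PORightModule R A]
    [AddCommGroup B] [PartialOrder B] [PORightModule R B] :
    PORightModule R (A × B) where
  rsmul x r := (rsmul x.1 r, rsmul x.2 r)
  add_rsmul a b r := by
    refine Prod.ext ?_ ?_ <;> simp [PORightModule.add_rsmul]
  rsmul_add a r s := by
    refine Prod.ext ?_ ?_ <;> simp [PORightModule.rsmul_add]
  rsmul_mul a r s := by
    refine Prod.ext ?_ ?_ <;> simp [PORightModule.rsmul_mul]
  rsmul_one a := by
    refine Prod.ext ?_ ?_ <;> simp [PORightModule.rsmul_one]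
  add_le_add_right' a b h c := by
    rw [Prod.le_def] at h ⊢
    constructor
    · simpa using PORightModule.add_le_add_right' R a.1 b.1 h.1 c.1
    · simpa using PORightModule.add_le_add_right' R a.2 b.2 h.2 c.2
  rsmul_nonneg a r ha hr := by
    rw [Prod.le_def] at ha ⊢
    constructor
    · simpa using PORightModule.rsmul_nonneg a.1 r (by simpa using ha.1) hr
    · simpa using PORightModule.rsmul_nonneg a.2 r (by simpa using ha.2) hr

section Defs

variable (R : Type*) [PORing R]

/-- The product `UX = a₁ξ₁ + ⋯ + aₙξₙ` of a row matrix `U = (a₁,…,aₙ)` with entries in `A`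
and a column matrix `X = (ξ₁,…,ξₙ)ᵗ` with entries in `R`. -/
def rowMul {A : Type*} [AddCommGroup A] [PartialOrder A] [PORightModule R A]
    {n : ℕ} (U : Fin n → A) (X : Fin n → R) : A :=
  ∑ i, rsmul (U i) (X i)

/-- A subset `S` of a partially ordered right `R`-module is a *finitely generated
`R⁺`-subsemimodule* if it is the set of all `R⁺`-linear combinations of some finite subset. -/
def IsFGConeIn {A : Type*} [AddCommGroup A] [PartialOrder A] [PORightModule R A]
    (S : Set A) : Prop :=
  ∃ (k : ℕ) (g : Fin k → A),
    S = { a | ∃ Y : Fin k → R, (∀ i, 0 ≤ Y i) ∧ a = rowMul R g Y }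

/-- `A` is *finitely related at* the row matrix `U ∈ M_{1,n}(A)` if the solution set of the
mixed system `UX ≥ 0, X ≥ 0` is a finitely generated `R⁺`-subsemimodule of `M_{n,1}(R)`. -/
def FinitelyRelatedAt {A : Type*} [AddCommGroup A] [PartialOrder A] [PORightModule R A]
    {n : ℕ} (U : Fin n → A) : Prop :=
  IsFGConeIn R {X : Fin n → R | 0 ≤ rowMul R U X ∧ ∀ i, 0 ≤ X i}

/-- `A` is *finitely po-presented at* the row matrix `U ∈ M_{1,n}(A)` if the solution set of
the system `UX ≥ 0` is a finitely generated `R⁺`-subsemimodule of `M_{n,1}(R)`. -/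
def FinitelyPoPresentedAt {A : Type*} [AddCommGroup A] [PartialOrder A] [PORightModule R A]
    {n : ℕ} (U : Fin n → A) : Prop :=
  IsFGConeIn R {X : Fin n → R | 0 ≤ rowMul R U X}

/-- A row matrix `U` is *spanning* if its entries generate `A` as a right `R`-module, i.e.
every element of `A` is an `R`-linear combination `UX` of the entries. -/
def SpanningRow {A : Type*} [AddCommGroup A] [PartialOrder A] [PORightModule R A]
    {n : ℕ} (U : Fin n → A) : Prop :=
  ∀ a : A, ∃ X : Fin n → R, a = rowMul R U X

variable (A : Type*) [AddCommGroup A] [PartialOrder A] [PORightModule R A]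

/-- `A` is *finitely po-presented* if it is finitely po-presented at some spanning row
matrix. -/
def FinitelyPoPresented : Prop :=
  ∃ (n : ℕ) (U : Fin n → A), SpanningRow R U ∧ FinitelyPoPresentedAt R U

/-- `A` is *finitely related* if it is a finitely generated right `R`-module and is finitely
related at every spanning row matrix. -/
def FinitelyRelatedMod : Prop :=
  (∃ (n : ℕ) (U : Fin n → A), SpanningRow R U) ∧
    ∀ (n : ℕ) (U : Fin n → A), SpanningRow R U → FinitelyRelatedAt R U

/-- `A` is *po-coherent* if it is finitely related at every row matrix of elements of `A`. -/
def PoCoherent : Prop :=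
  ∀ (n : ℕ) (U : Fin n → A), FinitelyRelatedAt R U

end Defs

/-- A po-ring is *right po-coherent* if it is po-coherent as a partially ordered right module
over itself. -/
def RightPoCoherent (R : Type*) [PORing R] : Prop :=
  PoCoherent R R

/-- A subset `S` of `A` is a *finitely generated `R`-submodule* if it is the set of all
`R`-linear combinations of some finite subset. -/
def IsFGSubmoduleSet (R : Type*) [PORing R] {A : Type*} [AddCommGroup A] [PartialOrder A]
    [PORightModule R A] (S : Set A) : Prop :=
  ∃ (k : ℕ) (g : Fin k → A), S = { a | ∃ Y : Fin k → R, a = rowMul R g Y }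

section AuxHelpers

variable {R : Type*} [PORing R] {A : Type*} [AddCommGroup A] [PartialOrder A]
  [PORightModule R A]

lemma rsmul_zero' (a : A) : rsmul a (0 : R) = 0 := by
  have h := rsmul_add a (0 : R) 0
  rw [add_zero] at h
  exact left_eq_add.mp h

lemma zero_rsmul' (r : R) : rsmul (0 : A) r = 0 := by
  have h := add_rsmul (0 : A) 0 r
  rw [add_zero] at h
  exact left_eq_add.mp h

lemma rsmul_neg' (a : A) (r : R) : rsmul a (-r) = -rsmul a r := by
  have h := rsmul_add a r (-r)
  rw [add_neg_cancel, rsmul_zero'] at h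
  exact (eq_neg_of_add_eq_zero_right h.symm)

lemma neg_rsmul' (a : A) (r : R) : rsmul (-a) r = -rsmul a r := by
  have h := add_rsmul a (-a) r
  rw [add_neg_cancel, zero_rsmul'] at h
  exact (eq_neg_of_add_eq_zero_right h.symm)

lemma rsmul_sub' (a : A) (r s : R) : rsmul a (r - s) = rsmul a r - rsmul a s := by
  rw [sub_eq_add_neg, rsmul_add, rsmul_neg', sub_eq_add_neg]

lemma sub_rsmul' (a b : A) (r : R) : rsmul (a - b) r = rsmul a r - rsmul b r := by
  rw [sub_eq_add_neg, add_rsmul, neg_rsmul', sub_eq_add_neg]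

lemma rsmul_sum' {ι : Type*} (a : A) (s : Finset ι) (f : ι → R) :
    rsmul a (∑ i ∈ s, f i) = ∑ i ∈ s, rsmul a (f i) := by
  classical
  induction s using Finset.induction with
  | empty => simp [rsmul_zero']
  | insert _ _ hx ih => simp [Finset.sum_insert hx, rsmul_add, ih]

lemma sum_rsmul' {ι : Type*} (s : Finset ι) (f : ι → A) (r : R) :
    rsmul (∑ i ∈ s, f i) r = ∑ i ∈ s, rsmul (f i) r := by
  classical
  induction s using Finset.induction with
  | empty => simp [zero_rsmul']
  | insert _ _ hx ih => simp [Finset.sum_insert hx, add_rsmul, ih]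

include R in
lemma add_nonneg' {a b : A} (ha : 0 ≤ a) (hb : 0 ≤ b) : 0 ≤ a + b := by
  have h := PORightModule.add_le_add_right' R 0 b hb a
  rw [zero_add] at h
  calc (0 : A) ≤ a := ha
    _ ≤ b + a := h
    _ = a + b := add_comm _ _

include R in
lemma sum_nonneg' {ι : Type*} (s : Finset ι) (f : ι → A) (h : ∀ i ∈ s, 0 ≤ f i) :
    0 ≤ ∑ i ∈ s, f i := by
  classical
  induction s using Finset.induction with
  | empty => simp
  | @insert x s hx ih =>
    rw [Finset.sum_insert hx]
    exact add_nonneg' (R := R) (h x (Finset.mem_insert_self _ _))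
      (ih fun i hi => h i (Finset.mem_insert_of_mem hi))

lemma rowMul_nonneg {n : ℕ} {U : Fin n → A} {X : Fin n → R}
    (hU : ∀ i, 0 ≤ U i) (hX : ∀ i, 0 ≤ X i) : 0 ≤ rowMul R U X := by
  apply sum_nonneg' (R := R)
  intro i _
  exact PORightModule.rsmul_nonneg (U i) (X i) (hU i) (hX i)

lemma rowMul_apply {l n : ℕ} (g : Fin l → Fin n → R) (Y : Fin l → R) (j : Fin n) :
    rowMul R g Y j = rowMul R (fun t => g t j) Y := by
  unfold rowMul
  rw [Finset.sum_apply]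
  rfl

lemma rowMul_rowMul {m l : ℕ} (u : Fin m → A) (G : Fin l → Fin m → R) (Y : Fin l → R) :
    rowMul R u (rowMul R G Y) = rowMul R (fun t => rowMul R u (G t)) Y := by
  unfold rowMul
  calc ∑ i, rsmul (u i) ((∑ t, rsmul (G t) (Y t)) i)
      = ∑ i, ∑ t, rsmul (u i) (G t i * Y t) := by
        refine Finset.sum_congr rfl fun i _ => ?_
        rw [Finset.sum_apply]
        exact rsmul_sum' (u i) Finset.univ fun t => G t i * Y t
    _ = ∑ t, ∑ i, rsmul (rsmul (u i) (G t i)) (Y t) := by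
        rw [Finset.sum_comm]
        exact Finset.sum_congr rfl fun t _ => Finset.sum_congr rfl fun i _ => by
          rw [← rsmul_mul]
    _ = ∑ t, rsmul (∑ i, rsmul (u i) (G t i)) (Y t) :=
        Finset.sum_congr rfl fun t _ => (sum_rsmul' Finset.univ _ (Y t)).symm

lemma rowMul_neg_row {n : ℕ} (w : Fin n → A) (X : Fin n → R) :
    rowMul R (fun i => -(w i)) X = -rowMul R w X := by
  unfold rowMul
  rw [← Finset.sum_neg_distrib]
  exact Finset.sum_congr rfl fun i _ => neg_rsmul' _ _

lemma rowMul_sub_row {l : ℕ} (p q : Fin l → A) (Y : Fin l → R) :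
    rowMul R (fun t => p t - q t) Y = rowMul R p Y - rowMul R q Y := by
  unfold rowMul
  rw [← Finset.sum_sub_distrib]
  exact Finset.sum_congr rfl fun i _ => sub_rsmul' _ _ _

lemma rowMul_sub_col {n : ℕ} (u : Fin n → A) (X X' : Fin n → R) :
    rowMul R u (fun i => X i - X' i) = rowMul R u X - rowMul R u X' := by
  unfold rowMul
  rw [← Finset.sum_sub_distrib]
  exact Finset.sum_congr rfl fun i _ => rsmul_sub' _ _ _

lemma rowMul_split {m k : ℕ} (u : Fin m → A) (w : Fin k → A) (X : Fin (m + k) → R) :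
    rowMul R (Fin.append u w) X
      = rowMul R u (fun i => X (Fin.castAdd k i)) + rowMul R w (fun i => X (Fin.natAdd m i)) := by
  unfold rowMul
  rw [Fin.sum_univ_add]
  simp [Fin.append_left, Fin.append_right]

lemma self_mem_cone {k : ℕ} (g : Fin k → A) (t : Fin k) :
    ∃ Y : Fin k → R, (∀ i, 0 ≤ Y i) ∧ g t = rowMul R g Y := by
  classical
  refine ⟨fun s => if s = t then 1 else 0, fun i => ?_, ?_⟩
  · by_cases hi : i = t <;> simp [hi, PORing.zero_le_one']
  · unfold rowMul
    rw [Finset.sum_eq_single t]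
    · simp [rsmul_one]
    · intro b _ hb
      simp [hb, rsmul_zero']
    · simp

/-- Key consequence of po-coherence: solution sets of *pairs* of inequalities
`UX ≥ 0`, `VX ≥ 0`, `X ≥ 0` are finitely generated cones. -/
lemma fgcone_two (hco : PoCoherent R A) {n : ℕ} (U V : Fin n → A) :
    IsFGConeIn R {X : Fin n → R | 0 ≤ rowMul R U X ∧ 0 ≤ rowMul R V X ∧ ∀ i, 0 ≤ X i} := by
  obtain ⟨k, g, hg⟩ := hco n U
  obtain ⟨l, f, hf⟩ := hco k (fun j => rowMul R V (g j))
  refine ⟨l, fun t => rowMul R g (f t), ?_⟩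
  ext X
  simp only [Set.mem_setOf_eq]
  constructor
  · rintro ⟨hU, hV, hpos⟩
    have hXmem : X ∈ {X : Fin n → R | 0 ≤ rowMul R U X ∧ ∀ i, 0 ≤ X i} := ⟨hU, hpos⟩
    rw [hg] at hXmem
    obtain ⟨Y, hY, rfl⟩ := hXmem
    rw [rowMul_rowMul] at hV
    have hYmem : Y ∈ {Y : Fin k → R |
        0 ≤ rowMul R (fun j => rowMul R V (g j)) Y ∧ ∀ i, 0 ≤ Y i} := ⟨hV, hY⟩
    rw [hf] at hYmem
    obtain ⟨Z, hZ, rfl⟩ := hYmem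
    exact ⟨Z, hZ, rowMul_rowMul g f Z⟩
  · rintro ⟨Z, hZ, rfl⟩
    rw [← rowMul_rowMul]
    have hYmem : rowMul R f Z ∈ {Y : Fin k → R |
        0 ≤ rowMul R (fun j => rowMul R V (g j)) Y ∧ ∀ i, 0 ≤ Y i} := by
      rw [hf]; exact ⟨Z, hZ, rfl⟩
    obtain ⟨hV', hYpos⟩ := hYmem
    have hXmem : rowMul R g (rowMul R f Z)
        ∈ {X : Fin n → R | 0 ≤ rowMul R U X ∧ ∀ i, 0 ≤ X i} := by
      rw [hg]; exact ⟨rowMul R f Z, hYpos, rfl⟩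
    refine ⟨hXmem.1, ?_, hXmem.2⟩
    rw [rowMul_rowMul]
    exact hV'

/-- Solution sets of homogeneous systems `UX = 0`, `X ≥ 0` are finitely generated cones. -/
lemma fgcone_eq (hco : PoCoherent R A) {n : ℕ} (U : Fin n → A) :
    IsFGConeIn R {X : Fin n → R | rowMul R U X = 0 ∧ ∀ i, 0 ≤ X i} := by
  have h2 := fgcone_two hco U (fun i => -(U i))
  have hset : {X : Fin n → R | rowMul R U X = 0 ∧ ∀ i, 0 ≤ X i}
      = {X : Fin n → R | 0 ≤ rowMul R U X ∧ 0 ≤ rowMul R (fun i => -(U i)) X ∧ ∀ i, 0 ≤ X i} := by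
    ext X
    simp only [Set.mem_setOf_eq, rowMul_neg_row]
    constructor
    · rintro ⟨h0, hpos⟩
      exact ⟨le_of_eq h0.symm, by rw [h0, neg_zero], hpos⟩
    · rintro ⟨h1, h2', hpos⟩
      have hz : rowMul R U X ≤ 0 := by
        have := PORightModule.add_le_add_right' R 0 (-rowMul R U X) h2' (rowMul R U X)
        simpa using this
      exact ⟨le_antisymm hz h1, hpos⟩
  rw [hset]
  exact h2

lemma append_nonneg {m k : ℕ} {X : Fin m → R} {X' : Fin k → R}
    (hX : ∀ i, 0 ≤ X i) (hX' : ∀ i, 0 ≤ X' i) : ∀ i, 0 ≤ Fin.append X X' i := fun i =>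
  Fin.addCases (motive := fun i => 0 ≤ Fin.append X X' i)
    (fun j => by simpa using hX j) (fun j => by simpa using hX' j) i

lemma rowMul_comp {l n n' : ℕ} (g : Fin l → Fin n → R) (Y : Fin l → R) (φ : Fin n' → Fin n) :
    (fun i => rowMul R g Y (φ i)) = rowMul R (fun t i => g t (φ i)) Y := by
  funext i
  rw [rowMul_apply, rowMul_apply]

lemma rowMul_u_comp {m l n : ℕ} (u : Fin m → A) (g : Fin l → Fin n → R) (Y : Fin l → R)
    (φ : Fin m → Fin n) :
    rowMul R u (fun i => rowMul R g Y (φ i))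
      = rowMul R (fun t => rowMul R u (fun i => g t (φ i))) Y := by
  rw [rowMul_comp, rowMul_rowMul]

lemma rowMul_comp_sub {l n n' : ℕ} (g : Fin l → Fin n → R) (Y : Fin l → R)
    (φ ψ : Fin n' → Fin n) :
    (fun i => rowMul R g Y (φ i) - rowMul R g Y (ψ i))
      = rowMul R (fun t i => g t (φ i) - g t (ψ i)) Y := by
  funext i
  rw [rowMul_apply, rowMul_apply, rowMul_apply]
  exact (rowMul_sub_row (fun t => g t (φ i)) (fun t => g t (ψ i)) Y).symm

lemma rowMul_u_comp_sub {m l n : ℕ} (u : Fin m → A) (g : Fin l → Fin n → R) (Y : Fin l → R)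
    (φ ψ : Fin m → Fin n) :
    rowMul R u (fun i => rowMul R g Y (φ i) - rowMul R g Y (ψ i))
      = rowMul R (fun t => rowMul R u (fun i => g t (φ i) - g t (ψ i))) Y := by
  rw [rowMul_comp_sub, rowMul_rowMul]

/-- The intersection of two finitely generated cones is the image of the solution cone of a
homogeneous system, hence finitely generated when `A` is po-coherent. -/
lemma cone_inter (hco : PoCoherent R A) {m k : ℕ} (u : Fin m → A) (v : Fin k → A) :
    IsFGConeIn R ({a : A | ∃ Y : Fin m → R, (∀ i, 0 ≤ Y i) ∧ a = rowMul R u Y} ∩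
      {a : A | ∃ Y : Fin k → R, (∀ i, 0 ≤ Y i) ∧ a = rowMul R v Y}) := by
  classical
  obtain ⟨l, g, hg⟩ := fgcone_eq hco (Fin.append u (fun j => -(v j)))
  have hWmul : ∀ X : Fin (m + k) → R,
      rowMul R (Fin.append u (fun j => -(v j))) X
        = rowMul R u (fun i => X (Fin.castAdd k i))
          - rowMul R v (fun i => X (Fin.natAdd m i)) := by
    intro X
    rw [rowMul_split, rowMul_neg_row, ← sub_eq_add_neg]
  refine ⟨l, fun t => rowMul R u (fun i => g t (Fin.castAdd k i)), ?_⟩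
  ext a
  simp only [Set.mem_inter_iff, Set.mem_setOf_eq]
  constructor
  · rintro ⟨⟨X, hX, rfl⟩, ⟨X', hX', ha'⟩⟩
    have hZ : Fin.append X X' ∈ {Z : Fin (m + k) → R |
        rowMul R (Fin.append u (fun j => -(v j))) Z = 0 ∧ ∀ i, 0 ≤ Z i} := by
      refine ⟨?_, append_nonneg hX hX'⟩
      rw [hWmul]
      have h1 : (fun i => Fin.append X X' (Fin.castAdd k i)) = X :=
        funext fun i => Fin.append_left ..
      have h2 : (fun i => Fin.append X X' (Fin.natAdd m i)) = X' :=
        funext fun i => Fin.append_right ..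
      rw [h1, h2, ← ha', sub_self]
    rw [hg] at hZ
    obtain ⟨Y, hY, hZY⟩ := hZ
    refine ⟨Y, hY, ?_⟩
    have hXeq : X = fun i => rowMul R g Y (Fin.castAdd k i) := by
      funext i
      have h := congrFun hZY (Fin.castAdd k i)
      rwa [Fin.append_left] at h
    rw [hXeq, rowMul_u_comp]
  · rintro ⟨Y, hY, rfl⟩
    have hZmem : rowMul R g Y ∈ {Z : Fin (m + k) → R |
        rowMul R (Fin.append u (fun j => -(v j))) Z = 0 ∧ ∀ i, 0 ≤ Z i} := by
      rw [hg]; exact ⟨Y, hY, rfl⟩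
    obtain ⟨hZ0, hZpos⟩ := hZmem
    rw [hWmul] at hZ0
    have heq := sub_eq_zero.mp hZ0
    constructor
    · exact ⟨fun i => rowMul R g Y (Fin.castAdd k i), fun i => hZpos _,
        (rowMul_u_comp u g Y _).symm⟩
    · refine ⟨fun i => rowMul R g Y (Fin.natAdd m i), fun i => hZpos _, ?_⟩
      calc rowMul R (fun t => rowMul R u fun i => g t (Fin.castAdd k i)) Y
          = rowMul R u (fun i => rowMul R g Y (Fin.castAdd k i)) :=
            (rowMul_u_comp u g Y _).symm
        _ = rowMul R v (fun i => rowMul R g Y (Fin.natAdd m i)) := heq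

/-- The intersection of two finitely generated submodules is finitely generated when `A` is
po-coherent (work with doubled variables to absorb the missing sign constraints). -/
lemma submod_inter (hco : PoCoherent R A) {m k : ℕ} (u : Fin m → A) (v : Fin k → A) :
    IsFGSubmoduleSet R ({a : A | ∃ Y : Fin m → R, a = rowMul R u Y} ∩
      {a : A | ∃ Y : Fin k → R, a = rowMul R v Y}) := by
  classical
  obtain ⟨l, g, hg⟩ := fgcone_eq hco
    (Fin.append (Fin.append u (fun j => -(v j)))
      (fun j => -(Fin.append u (fun j => -(v j)) j)))
  have hWmul : ∀ X : Fin (m + k) → R,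
      rowMul R (Fin.append u (fun j => -(v j))) X
        = rowMul R u (fun i => X (Fin.castAdd k i))
          - rowMul R v (fun i => X (Fin.natAdd m i)) := by
    intro X
    rw [rowMul_split, rowMul_neg_row, ← sub_eq_add_neg]
  have hW2mul : ∀ Z : Fin ((m + k) + (m + k)) → R,
      rowMul R (Fin.append (Fin.append u (fun j => -(v j)))
          (fun j => -(Fin.append u (fun j => -(v j)) j))) Z
        = rowMul R u (fun i => Z (Fin.castAdd (m + k) (Fin.castAdd k i))
              - Z (Fin.natAdd (m + k) (Fin.castAdd k i)))
          - rowMul R v (fun i => Z (Fin.castAdd (m + k) (Fin.natAdd m i))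
              - Z (Fin.natAdd (m + k) (Fin.natAdd m i))) := by
    intro Z
    rw [rowMul_split, rowMul_neg_row, ← sub_eq_add_neg, ← rowMul_sub_col, hWmul]
  refine ⟨l, fun t => rowMul R u (fun i => g t (Fin.castAdd (m + k) (Fin.castAdd k i))
      - g t (Fin.natAdd (m + k) (Fin.castAdd k i))), ?_⟩
  ext a
  simp only [Set.mem_inter_iff, Set.mem_setOf_eq]
  constructor
  · rintro ⟨⟨X, rfl⟩, ⟨X', ha'⟩⟩
    choose P Q hP hQ hPQ using fun i => PORing.directed' (Fin.append X X' i)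
    have hZ : Fin.append P Q ∈ {Z : Fin ((m + k) + (m + k)) → R |
        rowMul R (Fin.append (Fin.append u (fun j => -(v j)))
          (fun j => -(Fin.append u (fun j => -(v j)) j))) Z = 0 ∧ ∀ i, 0 ≤ Z i} := by
      refine ⟨?_, append_nonneg hP hQ⟩
      rw [hW2mul]
      have hcol : ∀ (j : Fin (m + k)),
          Fin.append P Q (Fin.castAdd (m + k) j) - Fin.append P Q (Fin.natAdd (m + k) j)
            = Fin.append X X' j := by
        intro j
        rw [Fin.append_left, Fin.append_right, ← hPQ j]
      have h1 : (fun i => Fin.append P Q (Fin.castAdd (m + k) (Fin.castAdd k i))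
          - Fin.append P Q (Fin.natAdd (m + k) (Fin.castAdd k i))) = X := by
        funext i
        rw [hcol, Fin.append_left]
      have h2 : (fun i => Fin.append P Q (Fin.castAdd (m + k) (Fin.natAdd m i))
          - Fin.append P Q (Fin.natAdd (m + k) (Fin.natAdd m i))) = X' := by
        funext i
        rw [hcol, Fin.append_right]
      rw [h1, h2, ← ha', sub_self]
    rw [hg] at hZ
    obtain ⟨Y, hY, hZY⟩ := hZ
    refine ⟨Y, ?_⟩
    have hXeq : X = fun i => rowMul R g Y (Fin.castAdd (m + k) (Fin.castAdd k i))
        - rowMul R g Y (Fin.natAdd (m + k) (Fin.castAdd k i)) := by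
      funext i
      have h1 := congrFun hZY (Fin.castAdd (m + k) (Fin.castAdd k i))
      have h2 := congrFun hZY (Fin.natAdd (m + k) (Fin.castAdd k i))
      rw [Fin.append_left] at h1
      rw [Fin.append_right] at h2
      rw [← h1, ← h2, ← hPQ, Fin.append_left]
    rw [hXeq, rowMul_u_comp_sub]
  · rintro ⟨Y, rfl⟩
    have hgt : ∀ t, rowMul R u (fun i => g t (Fin.castAdd (m + k) (Fin.castAdd k i))
          - g t (Fin.natAdd (m + k) (Fin.castAdd k i)))
        = rowMul R v (fun i => g t (Fin.castAdd (m + k) (Fin.natAdd m i))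
          - g t (Fin.natAdd (m + k) (Fin.natAdd m i))) := by
      intro t
      have hmem : g t ∈ {Z : Fin ((m + k) + (m + k)) → R |
          rowMul R (Fin.append (Fin.append u (fun j => -(v j)))
            (fun j => -(Fin.append u (fun j => -(v j)) j))) Z = 0 ∧ ∀ i, 0 ≤ Z i} := by
        rw [hg]; exact self_mem_cone g t
      have h0 := hmem.1
      rw [hW2mul] at h0
      exact sub_eq_zero.mp h0
    constructor
    · exact ⟨fun i => rowMul R g Y (Fin.castAdd (m + k) (Fin.castAdd k i))
          - rowMul R g Y (Fin.natAdd (m + k) (Fin.castAdd k i)),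
        (rowMul_u_comp_sub u g Y _ _).symm⟩
    · refine ⟨fun i => rowMul R g Y (Fin.castAdd (m + k) (Fin.natAdd m i))
          - rowMul R g Y (Fin.natAdd (m + k) (Fin.natAdd m i)), ?_⟩
      calc rowMul R (fun t => rowMul R u fun i =>
              g t (Fin.castAdd (m + k) (Fin.castAdd k i))
                - g t (Fin.natAdd (m + k) (Fin.castAdd k i))) Y
          = rowMul R (fun t => rowMul R v fun i =>
              g t (Fin.castAdd (m + k) (Fin.natAdd m i))
                - g t (Fin.natAdd (m + k) (Fin.natAdd m i))) Y := by
            rw [funext hgt]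
        _ = rowMul R v (fun i => rowMul R g Y (Fin.castAdd (m + k) (Fin.natAdd m i))
              - rowMul R g Y (Fin.natAdd (m + k) (Fin.natAdd m i))) :=
            (rowMul_u_comp_sub v g Y _ _).symm

end AuxHelpers

/-- Let `R` be a po-ring and `A` a po-coherent partially ordered right
`R`-module.  Then the intersection of any two finitely generated `R`-submodules of `A` is a
finitely generated `R`-submodule, and the intersection of any two finitely generated
`R⁺`-subsemimodules of `A` is a finitely generated `R⁺`-subsemimodule. -/
theorem fg_intersections_of_poCoherent
    (R A : Type*) [PORing R] [AddCommGroup A] [PartialOrder A] [PORightModule R A]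
    (h : PoCoherent R A) :
    (∀ S T : Set A, IsFGSubmoduleSet R S → IsFGSubmoduleSet R T →
      IsFGSubmoduleSet R (S ∩ T)) ∧
    (∀ S T : Set A, IsFGConeIn R S → IsFGConeIn R T → IsFGConeIn R (S ∩ T)) := by
  constructor
  · rintro S T ⟨m, u, rfl⟩ ⟨k, v, rfl⟩
    exact submod_inter h u v
  · rintro S T ⟨m, u, rfl⟩ ⟨k, v, rfl⟩
    exact cone_inter h u v
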